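/- Let A be a separable C*-algebra and D ⊆ A a weakly Cartan subalgebra. Then the relation ∼ on {(n, φ) : n ∈ N(D), φ ∈ supp°(n*n)}, defined by (n, φ) ∼ (m, ψ) iff φ = ψ, there is an open neighbourhood U of φ with U ⊆ supp°(n*n) ∩ supp°(m*m) on which α_n = α_m, and the unitary U^φ_{n*m} belongs to the connected component of the identity in the unitary group of D'/J_φ, is an equivalence relation. -/

import Mathlib

open WeakDual Filter Topology Classical

variable {A : Type} [NonUnitalNormedRing A] [StarRing A] [CStarRing A]
  [NormedSpace ℂ A] [IsScalarTower ℂ A A] [SMulCommClass ℂ A A] [CompleteSpace A] [StarModule ℂ A]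

/-- Evaluation of a character of `D` at an element of `A` (taken to be `0` off `D`). -/
noncomputable def evalD (D : NonUnitalStarSubalgebra ℂ A) (φ : characterSpace ℂ D) (a : A) : ℂ :=
  if h : a ∈ D then φ (⟨a, h⟩ : D) else 0

/-- The open support `supp°(a) = {φ ∈ D̂ : φ(a) ≠ 0}`. -/
def suppo (D : NonUnitalStarSubalgebra ℂ A) (a : A) : Set (characterSpace ℂ D) :=
  {φ | evalD D φ a ≠ 0}

/-- `n` is a normaliser of `D` in `A`. -/
def IsNormalizer (D : NonUnitalStarSubalgebra ℂ A) (n : A) : Prop :=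
  ∀ d ∈ D, n * d * star n ∈ D ∧ star n * d * n ∈ D

/-- `S` contains an approximate unit for `A`: there is a net in `S` converging
multiplicatively to the identity on every element of `A`. -/
def HasApproxUnit (S : Set A) : Prop :=
  ∃ (ι : Type) (l : Filter ι) (e : ι → A), l.NeBot ∧ (∀ i, e i ∈ S) ∧
    ∀ a : A, Tendsto (fun i => e i * a) l (nhds a) ∧ Tendsto (fun i => a * e i) l (nhds a)

/-- `α` is "the" homeomorphism `α_n : supp°(n*n) → supp°(nn*)` attached to a normaliser `n`,
i.e. a partial homeomorphism of `D̂` with source `supp°(n*n)`, target `supp°(nn*)`, and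
satisfying `φ(n*n)·(α_n φ)(d) = φ(n* d n)` for all `φ` in the source and `d ∈ D`. -/
def IsWeylHomeo (D : NonUnitalStarSubalgebra ℂ A) (n : A)
    (α : PartialHomeomorph (characterSpace ℂ D) (characterSpace ℂ D)) : Prop :=
  α.source = suppo D (star n * n) ∧ α.target = suppo D (n * star n) ∧
  ∀ φ ∈ α.source, ∀ d ∈ D, evalD D φ (star n * n) * evalD D (α φ) d = evalD D φ (star n * d * n)

/-- The relative commutant `D' = {a ∈ A : a d = d a for all d ∈ D}`, as a set. -/
def commutantSet (D : NonUnitalStarSubalgebra ℂ A) : Set A := {a | ∀ d ∈ D, a * d = d * a}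

/-- The ideal `J_φ ⊆ D'`: the closure of `(ker φ)·D'`. -/
noncomputable def Jset (D : NonUnitalStarSubalgebra ℂ A) (φ : characterSpace ℂ D) : Set A :=
  closure ((Submodule.span ℂ {x : A | ∃ k ∈ (D : Set A), ∃ a ∈ commutantSet D,
    evalD D φ k = 0 ∧ x = k * a} : Submodule ℂ A) : Set A)

/-- `e ∈ D'` represents the unit of `D'/J_φ`. -/
def IsUnitModJ (D : NonUnitalStarSubalgebra ℂ A) (φ : characterSpace ℂ D) (e : A) : Prop :=
  e ∈ commutantSet D ∧ ∀ a ∈ commutantSet D, e * a - a ∈ Jset D φ ∧ a * e - a ∈ Jset D φ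

/-- `D` is a weakly Cartan subalgebra of `A`. -/
def IsWeaklyCartan (D : NonUnitalStarSubalgebra ℂ A) : Prop :=
  IsClosed (D : Set A) ∧ (∀ x ∈ D, ∀ y ∈ D, x * y = y * x) ∧ HasApproxUnit (D : Set A) ∧
  (∀ φ : characterSpace ℂ D, ∃ e, IsUnitModJ D φ e) ∧
  (∀ φ : characterSpace ℂ D, ∃ d ∈ D, ∃ U : Set (characterSpace ℂ D),
    IsOpen U ∧ φ ∈ U ∧ ∀ ψ ∈ U, IsUnitModJ D ψ d)

/-- The relative commutant `D'` as a non-unital star subalgebra of `A`. -/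
def commutantAlg (D : NonUnitalStarSubalgebra ℂ A) : NonUnitalStarSubalgebra ℂ A where
  carrier := commutantSet D
  add_mem' := by
    intro a b ha hb d hd
    simp only [commutantSet, Set.mem_setOf_eq] at *
    rw [add_mul, mul_add, ha d hd, hb d hd]
  zero_mem' := by
    intro d _
    rw [zero_mul, mul_zero]
  mul_mem' := by
    intro a b ha hb d hd
    calc a * b * d = a * (b * d) := by rw [mul_assoc]
      _ = a * (d * b) := by rw [hb d hd]
      _ = a * d * b := by rw [mul_assoc]
      _ = d * a * b := by rw [ha d hd]
      _ = d * (a * b) := by rw [mul_assoc]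
  smul_mem' := by
    intro c a ha d hd
    rw [smul_mul_assoc, ha d hd, mul_smul_comm]
  star_mem' := by
    intro a ha d hd
    calc star a * d = star (star d * a) := by rw [star_mul, star_star]
      _ = star (a * star d) := by rw [← ha (star d) (star_mem hd)]
      _ = d * star a := by rw [star_mul, star_star]

/-- `w` is a representative in `A` of the unitary `U^φ_{n*m}` of `D'/J_φ`:
`w = φ(m*m)^{-1/2}·φ(n*n)^{-1/2}·(d n* m d)` for some admissible `U` and `d`. -/
noncomputable def WeylRep (D : NonUnitalStarSubalgebra ℂ A) (n m : A)
    (φ : characterSpace ℂ D) (w : A) : Prop :=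
  ∃ U : Set (characterSpace ℂ D), IsOpen U ∧ φ ∈ U ∧
    U ⊆ suppo D (star n * n) ∩ suppo D (star m * m) ∧
    (∃ αn αm : PartialHomeomorph (characterSpace ℂ D) (characterSpace ℂ D),
       IsWeylHomeo D n αn ∧ IsWeylHomeo D m αm ∧ Set.EqOn ⇑αn ⇑αm U) ∧
    ∃ d ∈ (D : Set A), suppo D d ⊆ U ∧ evalD D φ d = 1 ∧
      w = (evalD D φ (star m * m) ^ (-(1/2) : ℂ) * evalD D φ (star n * n) ^ (-(1/2) : ℂ)) •
        (d * (star n * m) * d)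

/-- The unitary `U^φ_{n*m}` of `D'/J_φ` lies in the connected component of the identity of
the unitary group of `D'/J_φ`; the quotient `D'/J_φ` is represented by an arbitrary
surjective star-homomorphism `π` from `D'` onto a unital C*-algebra `Q` with kernel `J_φ`. -/
noncomputable def InU0 (D : NonUnitalStarSubalgebra ℂ A) (n m : A)
    (φ : characterSpace ℂ D) : Prop :=
  ∀ (Q : Type) [NormedRing Q] [StarRing Q] [CStarRing Q] [NormedAlgebra ℂ Q]
    [CompleteSpace Q] [StarModule ℂ Q] (π : commutantAlg D →⋆ₙₐ[ℂ] Q),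
    Function.Surjective ⇑π →
    (∀ a : commutantAlg D, π a = 0 ↔ (a : A) ∈ Jset D φ) →
    ∃ w : commutantAlg D, WeylRep D n m φ (w : A) ∧
      ∃ hu : π w ∈ unitary Q, (⟨π w, hu⟩ : unitary Q) ∈ connectedComponent (1 : unitary Q)

/-- The relation `(n, φ) ∼ (m, ψ)` of Lemma 4.7 (for the trivial coaction). -/
noncomputable def WeylSimRaw (D : NonUnitalStarSubalgebra ℂ A) (n : A)
    (φ : characterSpace ℂ D) (m : A) (ψ : characterSpace ℂ D) : Prop :=
  φ = ψ ∧
  (∃ U : Set (characterSpace ℂ D), IsOpen U ∧ φ ∈ U ∧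
    U ⊆ suppo D (star n * n) ∩ suppo D (star m * m) ∧
    ∃ αn αm : PartialHomeomorph (characterSpace ℂ D) (characterSpace ℂ D),
      IsWeylHomeo D n αn ∧ IsWeylHomeo D m αm ∧ Set.EqOn ⇑αn ⇑αm U) ∧
  InU0 D n m φ

/-- The set of pairs `(n, φ)` with `n ∈ N(D)` and `φ ∈ supp°(n*n)`. -/
def WeylPair (D : NonUnitalStarSubalgebra ℂ A) : Type :=
  {p : A × characterSpace ℂ D // IsNormalizer D p.1 ∧ p.2 ∈ suppo D (star p.1 * p.1)}

set_option linter.unusedSectionVars false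
set_option maxHeartbeats 1000000

namespace WkAux

variable {A : Type} [NonUnitalNormedRing A] [StarRing A] [CStarRing A]
  [NormedSpace ℂ A] [IsScalarTower ℂ A A] [SMulCommClass ℂ A A] [CompleteSpace A] [StarModule ℂ A]
variable {D : NonUnitalStarSubalgebra ℂ A}

lemma mem_of_evalD_ne_zero {φ : characterSpace ℂ D} {a : A} (h : evalD D φ a ≠ 0) : a ∈ D := by
  by_contra hc
  simp [evalD, hc] at h

lemma evalD_apply (φ : characterSpace ℂ D) {a : A} (h : a ∈ D) :
    evalD D φ a = φ (⟨a, h⟩ : D) := dif_pos h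

lemma evalD_mul (φ : characterSpace ℂ D) {a b : A} (ha : a ∈ D) (hb : b ∈ D) :
    evalD D φ (a * b) = evalD D φ a * evalD D φ b := by
  rw [evalD_apply φ (mul_mem ha hb), evalD_apply φ ha, evalD_apply φ hb]
  have : (⟨a * b, mul_mem ha hb⟩ : D) = ⟨a, ha⟩ * ⟨b, hb⟩ := rfl
  rw [this, map_mul]

lemma evalD_smul (φ : characterSpace ℂ D) {a : A} (c : ℂ) (ha : a ∈ D) :
    evalD D φ (c • a) = c * evalD D φ a := by
  rw [evalD_apply φ (SMulMemClass.smul_mem c ha), evalD_apply φ ha]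
  have : (⟨c • a, SMulMemClass.smul_mem c ha⟩ : D) = c • ⟨a, ha⟩ := rfl
  rw [this, map_smul]
  simp

lemma evalD_sub (φ : characterSpace ℂ D) {a b : A} (ha : a ∈ D) (hb : b ∈ D) :
    evalD D φ (a - b) = evalD D φ a - evalD D φ b := by
  rw [evalD_apply φ (sub_mem ha hb), evalD_apply φ ha, evalD_apply φ hb]
  have : (⟨a - b, sub_mem ha hb⟩ : D) = ⟨a, ha⟩ - ⟨b, hb⟩ := rfl
  rw [this, map_sub]

lemma suppo_isOpen (a : A) : IsOpen (suppo D a) := by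
  by_cases h : a ∈ D
  · have : suppo D a = (fun φ : characterSpace ℂ D => φ (⟨a, h⟩ : D)) ⁻¹' {(0:ℂ)}ᶜ := by
      ext φ; simp [suppo, evalD_apply φ h]
    rw [this]
    exact (isOpen_compl_singleton).preimage
      ((WeakDual.eval_continuous (⟨a,h⟩ : D)).comp continuous_subtype_val)
  · have : suppo D a = ∅ := by ext φ; simp [suppo, evalD, h]
    rw [this]; exact isOpen_empty

lemma star_mul_self_mem (hcl : IsClosed (D : Set A)) (hau : HasApproxUnit (D : Set A))
    {n : A} (hn : IsNormalizer D n) : star n * n ∈ D := by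
  obtain ⟨ι, l, e, hbot, hmem, hconv⟩ := hau
  have htend : Tendsto (fun i => star n * e i * n) l (nhds (star n * n)) := by
    have h1 := (hconv n).1
    have := h1.const_mul (star n)
    simpa [mul_assoc] using this
  exact hcl.mem_of_tendsto htend (Filter.Eventually.of_forall fun i => (hn (e i) (hmem i)).2)

lemma mul_self_star_mem (hcl : IsClosed (D : Set A)) (hau : HasApproxUnit (D : Set A))
    {n : A} (hn : IsNormalizer D n) : n * star n ∈ D := by
  obtain ⟨ι, l, e, hbot, hmem, hconv⟩ := hau
  have htend : Tendsto (fun i => n * e i * star n) l (nhds (n * star n)) := by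
    have h1 := (hconv (star n)).1
    have := h1.const_mul n
    simpa [mul_assoc] using this
  exact hcl.mem_of_tendsto htend (Filter.Eventually.of_forall fun i => (hn (e i) (hmem i)).1)

lemma isNormalizer_star {n : A} (hn : IsNormalizer D n) : IsNormalizer D (star n) := by
  intro d hd
  constructor
  · simpa [star_star] using (hn d hd).2
  · simpa [star_star] using (hn d hd).1

lemma isNormalizer_mulD {h n : A} (hh : h ∈ D) (hn : IsNormalizer D n) :
    IsNormalizer D (h * n) := by
  intro d hd
  constructor
  · have : h * n * d * star (h * n) = h * (n * d * star n) * star h := by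
      simp [star_mul, mul_assoc]
    rw [this]
    exact mul_mem (mul_mem hh (hn d hd).1) (star_mem hh)
  · have : star (h * n) * d * (h * n) = star n * (star h * d * h) * n := by
      simp [star_mul, mul_assoc]
    rw [this]
    exact (hn _ (mul_mem (mul_mem (star_mem hh) hd) hh)).2

lemma mem_commutantSet_of_mem (habel : ∀ x ∈ D, ∀ y ∈ D, x * y = y * x)
    {a : A} (ha : a ∈ D) : a ∈ commutantSet D :=
  fun d hd => habel a ha d hd

instance instCStarRingD : CStarRing ↥D := ⟨fun x => by
  show ‖(x:A)‖ * ‖(x:A)‖ ≤ ‖((star x * x : ↥D) : A)‖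
  exact CStarRing.norm_mul_self_le (x : A)⟩

lemma eq_zero_of_forall_evalD_zero (hcl : IsClosed (D : Set A))
    (habel : ∀ x ∈ D, ∀ y ∈ D, x * y = y * x)
    {x : A} (hx : x ∈ D) (hsa : IsSelfAdjoint x)
    (h : ∀ ψ : characterSpace ℂ ↥D, evalD D ψ x = 0) : x = 0 := by
  haveI : CompleteSpace ↥D := hcl.completeSpace_coe
  letI : NormedCommRing (Unitization ℂ ↥D) :=
    { (inferInstance : NormedRing (Unitization ℂ ↥D)) with
      mul_comm := fun a b => by
        refine Unitization.ext (mul_comm _ _) ?_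
        rw [Unitization.snd_mul, Unitization.snd_mul]
        have h2 : a.snd * b.snd = b.snd * a.snd :=
          Subtype.ext (habel _ (a.snd).2 _ (b.snd).2)
        rw [h2]; abel }
  set x' : ↥D := ⟨x, hx⟩ with hx'
  have hsa' : IsSelfAdjoint ((x' : Unitization ℂ ↥D)) := by
    rw [IsSelfAdjoint, ← Unitization.inr_star]
    congr 1
    exact Subtype.ext hsa
  have hspec : spectrum ℂ ((x' : Unitization ℂ ↥D)) ⊆ {0} := by
    intro z hz
    obtain ⟨f, hf⟩ := WeakDual.CharacterSpace.mem_spectrum_iff_exists.mp hz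
    simp only [Set.mem_singleton_iff]
    rw [← hf]
    by_cases hg : ∀ z : ↥D, f (z : Unitization ℂ ↥D) = 0
    · exact hg x'
    · push_neg at hg
      let T : ↥D →L[ℂ] Unitization ℂ ↥D :=
        { toLinearMap := Unitization.inrHom ℂ ℂ ↥D
          cont := Unitization.continuous_inr }
      let W : WeakDual ℂ ↥D := (WeakDual.CharacterSpace.toCLM f).comp T
      have hW : W ∈ characterSpace ℂ ↥D := by
        constructor
        · obtain ⟨z0, hz0⟩ := hg
          intro hc
          apply hz0
          have : W z0 = 0 := by rw [hc]; rfl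
          exact this
        · intro a b
          show f ((Unitization.inrHom ℂ ℂ ↥D) (a * b) : Unitization ℂ ↥D) = _
          have : ((Unitization.inrHom ℂ ℂ ↥D) (a * b) : Unitization ℂ ↥D)
              = ((a : Unitization ℂ ↥D) * (b : Unitization ℂ ↥D)) := Unitization.inr_mul ℂ a b
          rw [this, map_mul]
          rfl
      have := h ⟨W, hW⟩
      rw [evalD_apply _ hx] at this
      exact this
  have hrad : spectralRadius ℂ ((x' : Unitization ℂ ↥D)) = 0 := by
    have hne := spectrum.nonempty ((x' : Unitization ℂ ↥D))
    have heq : spectrum ℂ ((x' : Unitization ℂ ↥D)) = {0} :=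
      Set.Subset.antisymm hspec (by
        obtain ⟨z, hz⟩ := hne
        have := hspec hz
        simp only [Set.mem_singleton_iff] at this
        subst this
        exact Set.singleton_subset_iff.mpr hz)
    rw [spectralRadius, heq]
    simp
  letI : CStarAlgebra (Unitization ℂ ↥D) := {}
  have hn : ‖(x' : Unitization ℂ ↥D)‖₊ = 0 := by
    have := hsa'.spectralRadius_eq_nnnorm
    rw [hrad] at this
    exact_mod_cast this.symm
  have h0 : (x' : Unitization ℂ ↥D) = 0 := by simpa using hn
  have h1 : x' = 0 := Unitization.inr_injective (by simpa using h0)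
  exact congrArg Subtype.val h1

end WkAux
namespace WkAux

variable {A : Type} [NonUnitalNormedRing A] [StarRing A] [CStarRing A]
  [NormedSpace ℂ A] [IsScalarTower ℂ A A] [SMulCommClass ℂ A A] [CompleteSpace A] [StarModule ℂ A]
variable {D : NonUnitalStarSubalgebra ℂ A}

/-- The key commutant lemma: if `α_n` and `α_k` agree (pointwise, as character identities)
on the support of `d`, then `d (n* k) d` lies in the commutant of `D`. -/
lemma commutant_core (hcl : IsClosed (D : Set A))
    (habel : ∀ x ∈ D, ∀ y ∈ D, x * y = y * x)
    {n k d : A} (hn : IsNormalizer D n) (hk : IsNormalizer D k) (hd : d ∈ D)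
    (H : ∀ ψ : characterSpace ℂ D, evalD D ψ d ≠ 0 →
      evalD D ψ (star n * n) ≠ 0 ∧
      ∀ g ∈ D, evalD D ψ (star k * k) * evalD D ψ (star n * g * n)
        = evalD D ψ (star n * n) * evalD D ψ (star k * g * k)) :
    d * (star n * k) * d ∈ commutantSet D := by
  intro d0 hd0
  set c : A := d * d0 with hc
  have hcD : c ∈ D := mul_mem hd hd0
  have hcc : d0 * d = c := (habel d0 hd0 d hd).symm ▸ rfl
  -- the commutator
  set y : A := d * (star n * k) * c - c * (star n * k) * d with hy
  -- reduce the goal to y = 0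
  have hgoal : d * (star n * k) * d * d0 - d0 * (d * (star n * k) * d) = y := by
    rw [hy, hc]
    have h1 : d * (star n * k) * d * d0 = d * (star n * k) * (d * d0) := by
      simp [mul_assoc]
    have h2 : d0 * (d * (star n * k) * d) = d * d0 * (star n * k) * d := by
      have : d0 * d = d * d0 := habel d0 hd0 d hd
      simp only [← mul_assoc, this]
    rw [h1, h2]
  -- memberships of the middle elements
  have hg1 : n * (star d * d) * star n ∈ D := (hn _ (mul_mem (star_mem hd) hd)).1
  have hg2 : n * (star d * c) * star n ∈ D := (hn _ (mul_mem (star_mem hd) hcD)).1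
  have hg3 : n * (star c * d) * star n ∈ D := (hn _ (mul_mem (star_mem hcD) hd)).1
  have hg4 : n * (star c * c) * star n ∈ D := (hn _ (mul_mem (star_mem hcD) hcD)).1
  have hh1 : star k * (n * (star d * d) * star n) * k ∈ D := (hk _ hg1).2
  have hh2 : star k * (n * (star d * c) * star n) * k ∈ D := (hk _ hg2).2
  have hh3 : star k * (n * (star c * d) * star n) * k ∈ D := (hk _ hg3).2
  have hh4 : star k * (n * (star c * c) * star n) * k ∈ D := (hk _ hg4).2
  -- expansion of star y * y
  have hexp : star y * y =
      (star c * (star k * (n * (star d * d) * star n) * k) * c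
        - star c * (star k * (n * (star d * c) * star n) * k) * d)
      - (star d * (star k * (n * (star c * d) * star n) * k) * c
        - star d * (star k * (n * (star c * c) * star n) * k) * d) := by
    rw [hy]
    have hs : star (d * (star n * k) * c - c * (star n * k) * d)
        = star c * (star k * n) * star d - star d * (star k * n) * star c := by
      simp [star_sub, star_mul, star_star, mul_assoc]
    rw [hs, sub_mul, mul_sub, mul_sub]
    congr 1 <;> congr 1 <;> simp [mul_assoc]
  -- membership of star y * y in D
  have hzD : star y * y ∈ D := by
    rw [hexp]
    exact sub_mem (sub_mem (mul_mem (mul_mem (star_mem hcD) hh1) hcD)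
        (mul_mem (mul_mem (star_mem hcD) hh2) hd))
      (sub_mem (mul_mem (mul_mem (star_mem hd) hh3) hcD)
        (mul_mem (mul_mem (star_mem hd) hh4) hd))
  -- all characters vanish on star y * y
  have hvanish : ∀ ψ : characterSpace ℂ D, evalD D ψ (star y * y) = 0 := by
    intro ψ
    have hT : evalD D ψ (star y * y)
        = (evalD D ψ (star c) * evalD D ψ (star k * (n * (star d * d) * star n) * k)
            * evalD D ψ c
          - evalD D ψ (star c) * evalD D ψ (star k * (n * (star d * c) * star n) * k)
            * evalD D ψ d)
        - (evalD D ψ (star d) * evalD D ψ (star k * (n * (star c * d) * star n) * k)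
            * evalD D ψ c
          - evalD D ψ (star d) * evalD D ψ (star k * (n * (star c * c) * star n) * k)
            * evalD D ψ d) := by
      rw [hexp]
      rw [evalD_sub ψ (sub_mem (mul_mem (mul_mem (star_mem hcD) hh1) hcD)
            (mul_mem (mul_mem (star_mem hcD) hh2) hd))
          (sub_mem (mul_mem (mul_mem (star_mem hd) hh3) hcD)
            (mul_mem (mul_mem (star_mem hd) hh4) hd)),
        evalD_sub ψ (mul_mem (mul_mem (star_mem hcD) hh1) hcD)
          (mul_mem (mul_mem (star_mem hcD) hh2) hd),
        evalD_sub ψ (mul_mem (mul_mem (star_mem hd) hh3) hcD)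
          (mul_mem (mul_mem (star_mem hd) hh4) hd),
        evalD_mul ψ (mul_mem (star_mem hcD) hh1) hcD,
        evalD_mul ψ (star_mem hcD) hh1,
        evalD_mul ψ (mul_mem (star_mem hcD) hh2) hd,
        evalD_mul ψ (star_mem hcD) hh2,
        evalD_mul ψ (mul_mem (star_mem hd) hh3) hcD,
        evalD_mul ψ (star_mem hd) hh3,
        evalD_mul ψ (mul_mem (star_mem hd) hh4) hd,
        evalD_mul ψ (star_mem hd) hh4]
    by_cases hψd : evalD D ψ d = 0
    · have hψc : evalD D ψ c = 0 := by
        rw [hc, evalD_mul ψ hd hd0, hψd, zero_mul]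
      rw [hT, hψd, hψc]; ring
    · obtain ⟨hnn0, hid⟩ := H ψ hψd
      have hnnD : star n * n ∈ D := mem_of_evalD_ne_zero hnn0
      have hmid : ∀ f : A, (hf : f ∈ D) →
          evalD D ψ (star n * n) * evalD D ψ (star k * (n * f * star n) * k)
            = evalD D ψ (star k * k)
              * (evalD D ψ (star n * n) * evalD D ψ f * evalD D ψ (star n * n)) := by
        intro f hf
        have hgf : n * f * star n ∈ D := (hn f hf).1
        have h1 := hid (n * f * star n) hgf
        have h2 : star n * (n * f * star n) * n = star n * n * f * (star n * n) := by
          simp [mul_assoc]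
        rw [h2] at h1
        have h3 : evalD D ψ (star n * n * f * (star n * n))
            = evalD D ψ (star n * n) * evalD D ψ f * evalD D ψ (star n * n) := by
          rw [evalD_mul ψ (mul_mem (mul_mem hnnD hf) hnnD |> fun _ => mul_mem hnnD hf) hnnD,
            evalD_mul ψ hnnD hf]
        rw [h3] at h1
        exact h1.symm
      have hm1 := hmid (star d * d) (mul_mem (star_mem hd) hd)
      have hm2 := hmid (star d * c) (mul_mem (star_mem hd) hcD)
      have hm3 := hmid (star c * d) (mul_mem (star_mem hcD) hd)
      have hm4 := hmid (star c * c) (mul_mem (star_mem hcD) hcD)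
      rw [evalD_mul ψ (star_mem hd) hd] at hm1
      rw [evalD_mul ψ (star_mem hd) hcD] at hm2
      rw [evalD_mul ψ (star_mem hcD) hd] at hm3
      rw [evalD_mul ψ (star_mem hcD) hcD] at hm4
      rw [hT]
      refine (mul_eq_zero.mp ?_).resolve_left hnn0
      linear_combination (evalD D ψ (star c) * evalD D ψ c) * hm1
        - (evalD D ψ (star c) * evalD D ψ d) * hm2
        - (evalD D ψ (star d) * evalD D ψ c) * hm3
        + (evalD D ψ (star d) * evalD D ψ d) * hm4
  -- conclude
  have hz : star y * y = 0 :=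
    eq_zero_of_forall_evalD_zero hcl habel hzD (IsSelfAdjoint.star_mul_self y) hvanish
  have hy0 : y = 0 := by
    have := CStarRing.norm_star_mul_self (x := y)
    rw [hz, norm_zero] at this
    exact norm_eq_zero.mp (mul_self_eq_zero.mp this.symm)
  have := hgoal.symm ▸ hy0
  exact sub_eq_zero.mp (hgoal.trans hy0)

end WkAux
namespace WkAux

variable {A : Type} [NonUnitalNormedRing A] [StarRing A] [CStarRing A]
  [NormedSpace ℂ A] [IsScalarTower ℂ A A] [SMulCommClass ℂ A A] [CompleteSpace A] [StarModule ℂ A]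
variable {D : NonUnitalStarSubalgebra ℂ A}

lemma char_eq_of_forall_evalD {ψ₁ ψ₂ : characterSpace ℂ D}
    (h : ∀ x ∈ D, evalD D ψ₁ x = evalD D ψ₂ x) : ψ₁ = ψ₂ := by
  apply WeakDual.CharacterSpace.ext
  intro x
  have := h ↑x x.2
  rwa [evalD_apply ψ₁ x.2, evalD_apply ψ₂ x.2, Subtype.coe_eta] at this

/-- The conjugation map `d ↦ m* d m` as a continuous linear map on `D`. -/
noncomputable def conjCLM (m : A) (hm : IsNormalizer D m) : ↥D →L[ℂ] ↥D :=
  LinearMap.mkContinuous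
    { toFun := fun x : ↥D => (⟨star m * ↑x * m, (hm ↑x x.2).2⟩ : ↥D)
      map_add' := fun a b => Subtype.ext (by
        show star m * (↑a + ↑b) * m = star m * ↑a * m + star m * ↑b * m
        rw [mul_add, add_mul])
      map_smul' := fun c a => Subtype.ext (by
        show star m * (c • (a : A)) * m = c • (star m * ↑a * m)
        rw [mul_smul_comm, smul_mul_assoc]) }
    (‖star m‖ * ‖m‖)
    (fun x => by
      show ‖star m * ↑x * m‖ ≤ ‖star m‖ * ‖m‖ * ‖(x : A)‖
      calc ‖star m * ↑x * m‖ ≤ ‖star m * ↑x‖ * ‖m‖ := norm_mul_le _ _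
        _ ≤ ‖star m‖ * ‖(x : A)‖ * ‖m‖ :=
            mul_le_mul_of_nonneg_right (norm_mul_le _ _) (norm_nonneg _)
        _ = ‖star m‖ * ‖m‖ * ‖(x : A)‖ := by ring)

lemma conj_mul_identity (habel : ∀ x ∈ D, ∀ y ∈ D, x * y = y * x)
    {m : A} (hmm' : m * star m ∈ D) {a b : A} (hb : b ∈ D) :
    (star m * a * m) * (star m * b * m) = star m * (a * b) * m * (star m * m) := by
  have h1 : m * (star m * (b * m)) = b * (m * (star m * m)) := by
    have e1 : m * (star m * (b * m)) = ((m * star m) * b) * m := by simp [mul_assoc]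
    have e2 : ((m * star m) * b) * m = (b * (m * star m)) * m := by
      rw [habel _ hmm' _ hb]
    rw [e1, e2]; simp [mul_assoc]
  simp only [mul_assoc]
  rw [h1]

/-- The underlying weak-dual element of the Weyl character. -/
noncomputable def weylCharW (m : A) (hm : IsNormalizer D m) (φ : characterSpace ℂ D) :
    WeakDual ℂ ↥D :=
  (evalD D φ (star m * m))⁻¹ • ((WeakDual.CharacterSpace.toCLM φ).comp (conjCLM m hm))

/-- Existence of the Weyl character at `φ`. -/
lemma weylF_exists (habel : ∀ x ∈ D, ∀ y ∈ D, x * y = y * x)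
    {m : A} (hm : IsNormalizer D m) (hmmD : star m * m ∈ D) (hmm'D : m * star m ∈ D)
    {φ : characterSpace ℂ D} (hφ : evalD D φ (star m * m) ≠ 0) :
    ∃ ψ : characterSpace ℂ D, (ψ : WeakDual ℂ ↥D) = weylCharW m hm φ ∧
      ∀ x ∈ D, evalD D φ (star m * m) * evalD D ψ x = evalD D φ (star m * x * m) := by
  set c := evalD D φ (star m * m) with hcdef
  set W : WeakDual ℂ ↥D := weylCharW m hm φ with hWdef
  have hWapp : ∀ x : ↥D, W x = c⁻¹ * φ (⟨star m * ↑x * m, (hm ↑x x.2).2⟩ : ↥D) := by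
    intro x; rfl
  have hWeval : ∀ (x : A) (hx : x ∈ D), c * W ⟨x, hx⟩ = evalD D φ (star m * x * m) := by
    intro x hx
    rw [hWapp, ← mul_assoc, mul_inv_cancel₀ hφ, one_mul, evalD_apply φ ((hm x hx).2)]
  have hWmul : ∀ x y : ↥D, W (x * y) = W x * W y := by
    intro x y
    have key : c * (c * W (x * y)) = c * (c * (W x * W y)) := by
      have e1 : c * W (x * y) = evalD D φ (star m * (↑x * ↑y) * m) := hWeval _ (mul_mem x.2 y.2)
      have e2 : c * W x = evalD D φ (star m * ↑x * m) := by
        have := hWeval ↑x x.2; rwa [Subtype.coe_eta] at this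
      have e3 : c * W y = evalD D φ (star m * ↑y * m) := by
        have := hWeval ↑y y.2; rwa [Subtype.coe_eta] at this
      have e4 : evalD D φ (star m * ↑x * m) * evalD D φ (star m * ↑y * m)
          = evalD D φ (star m * (↑x * ↑y) * m) * c := by
        rw [← evalD_mul φ ((hm ↑x x.2).2) ((hm ↑y y.2).2),
          conj_mul_identity habel hmm'D y.2,
          evalD_mul φ ((hm _ (mul_mem x.2 y.2)).2) hmmD]
      calc c * (c * W (x * y)) = c * evalD D φ (star m * (↑x * ↑y) * m) := by rw [e1]
        _ = evalD D φ (star m * ↑x * m) * evalD D φ (star m * ↑y * m) := by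
              rw [e4]; ring
        _ = (c * W x) * (c * W y) := by rw [e2, e3]
        _ = c * (c * (W x * W y)) := by ring
    exact mul_left_cancel₀ hφ (mul_left_cancel₀ hφ key)
  have hWne : W ≠ 0 := by
    intro h0
    have h1 : c * W ⟨m * star m, hmm'D⟩ = evalD D φ (star m * (m * star m) * m) :=
      hWeval _ hmm'D
    have h2 : star m * (m * star m) * m = (star m * m) * (star m * m) := by
      simp [mul_assoc]
    rw [h0] at h1
    have hz : (0 : WeakDual ℂ ↥D) (⟨m * star m, hmm'D⟩ : ↥D) = 0 := rfl
    rw [hz, mul_zero] at h1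
    rw [h2, evalD_mul φ hmmD hmmD] at h1
    exact hφ (mul_self_eq_zero.mp h1.symm)
  refine ⟨⟨W, hWne, hWmul⟩, rfl, ?_⟩
  intro x hx
  have h5 : evalD D (⟨W, hWne, hWmul⟩ : characterSpace ℂ D) x = W ⟨x, hx⟩ :=
    evalD_apply _ hx
  rw [h5]
  exact hWeval x hx

/-- The Weyl partial map on the character space, defined by choice. -/
noncomputable def weylF (D : NonUnitalStarSubalgebra ℂ A) (m : A)
    (φ : characterSpace ℂ D) : characterSpace ℂ D :=
  if h : (evalD D φ (star m * m) ≠ 0) ∧ ∃ ψ : characterSpace ℂ D,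
      ∀ x ∈ D, evalD D φ (star m * m) * evalD D ψ x = evalD D φ (star m * x * m)
  then h.2.choose else φ

lemma weylF_prop (habel : ∀ x ∈ D, ∀ y ∈ D, x * y = y * x)
    {m : A} (hm : IsNormalizer D m) (hmmD : star m * m ∈ D) (hmm'D : m * star m ∈ D)
    {φ : characterSpace ℂ D} (hφ : evalD D φ (star m * m) ≠ 0) :
    ∀ x ∈ D, evalD D φ (star m * m) * evalD D (weylF D m φ) x
      = evalD D φ (star m * x * m) := by
  obtain ⟨ψ, -, hprop⟩ := weylF_exists habel hm hmmD hmm'D hφ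
  have h : (evalD D φ (star m * m) ≠ 0) ∧ ∃ ψ : characterSpace ℂ D,
      ∀ x ∈ D, evalD D φ (star m * m) * evalD D ψ x = evalD D φ (star m * x * m) :=
    ⟨hφ, ψ, hprop⟩
  rw [weylF, dif_pos h]
  exact h.2.choose_spec

lemma evalD_weylF (habel : ∀ x ∈ D, ∀ y ∈ D, x * y = y * x)
    {m : A} (hm : IsNormalizer D m) (hmmD : star m * m ∈ D) (hmm'D : m * star m ∈ D)
    {φ : characterSpace ℂ D} (hφ : evalD D φ (star m * m) ≠ 0) {x : A} (hx : x ∈ D) :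
    evalD D (weylF D m φ) x = (evalD D φ (star m * m))⁻¹ * evalD D φ (star m * x * m) := by
  have := weylF_prop habel hm hmmD hmm'D hφ x hx
  field_simp
  linear_combination this

lemma weylF_target (habel : ∀ x ∈ D, ∀ y ∈ D, x * y = y * x)
    {m : A} (hm : IsNormalizer D m) (hmmD : star m * m ∈ D) (hmm'D : m * star m ∈ D)
    {φ : characterSpace ℂ D} (hφ : evalD D φ (star m * m) ≠ 0) :
    evalD D (weylF D m φ) (m * star m) = evalD D φ (star m * m) := by
  rw [evalD_weylF habel hm hmmD hmm'D hφ hmm'D]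
  have h2 : star m * (m * star m) * m = (star m * m) * (star m * m) := by
    simp [mul_assoc]
  rw [h2, evalD_mul φ hmmD hmmD, ← mul_assoc, inv_mul_cancel₀ hφ, one_mul]

lemma weylF_uniq (habel : ∀ x ∈ D, ∀ y ∈ D, x * y = y * x)
    {m : A} (hm : IsNormalizer D m) (hmmD : star m * m ∈ D) (hmm'D : m * star m ∈ D)
    {φ : characterSpace ℂ D} (hφ : evalD D φ (star m * m) ≠ 0)
    {ψ : characterSpace ℂ D}
    (hψ : ∀ x ∈ D, evalD D φ (star m * m) * evalD D ψ x = evalD D φ (star m * x * m)) :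
    ψ = weylF D m φ := by
  apply char_eq_of_forall_evalD
  intro x hx
  have h1 := hψ x hx
  have h2 := weylF_prop habel hm hmmD hmm'D hφ x hx
  exact mul_left_cancel₀ hφ (h1.trans h2.symm)

lemma weylF_left_inv (habel : ∀ x ∈ D, ∀ y ∈ D, x * y = y * x)
    {m : A} (hm : IsNormalizer D m) (hmmD : star m * m ∈ D) (hmm'D : m * star m ∈ D)
    {φ : characterSpace ℂ D} (hφ : evalD D φ (star m * m) ≠ 0) :
    weylF D (star m) (weylF D m φ) = φ := by
  set ψ := weylF D m φ with hψdef
  have hm' : IsNormalizer D (star m) := isNormalizer_star hm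
  have hmmD' : star (star m) * star m ∈ D := by rw [star_star]; exact hmm'D
  have hmm'D' : star m * star (star m) ∈ D := by rw [star_star]; exact hmmD
  have hψ : evalD D ψ (star (star m) * star m) ≠ 0 := by
    rw [star_star]
    rw [hψdef, weylF_target habel hm hmmD hmm'D hφ]
    exact hφ
  symm
  apply weylF_uniq habel hm' hmmD' hmm'D' hψ
  intro x hx
  -- goal : evalD ψ (star (star m) * star m) * evalD φ x = evalD ψ (star (star m) * x * star m)
  have e0 : star (star m) * star m = m * star m := by rw [star_star]
  have e1 : star (star m) * x * star m = m * x * star m := by rw [star_star]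
  rw [e0, e1, hψdef, weylF_target habel hm hmmD hmm'D hφ,
    evalD_weylF habel hm hmmD hmm'D hφ ((hm x hx).1)]
  have e2 : star m * (m * x * star m) * m = (star m * m) * x * (star m * m) := by
    simp [mul_assoc]
  rw [e2]
  have e3 : evalD D φ (star m * m * x * (star m * m))
      = evalD D φ (star m * m) * evalD D φ x * evalD D φ (star m * m) := by
    rw [evalD_mul φ (mul_mem (mul_mem hmmD hx) hmmD |> fun _ => mul_mem hmmD hx) hmmD,
      evalD_mul φ hmmD hx]
  rw [e3]
  field_simp

lemma weylF_coe (habel : ∀ x ∈ D, ∀ y ∈ D, x * y = y * x)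
    {m : A} (hm : IsNormalizer D m) (hmmD : star m * m ∈ D) (hmm'D : m * star m ∈ D)
    {φ : characterSpace ℂ D} (hφ : evalD D φ (star m * m) ≠ 0) :
    ((weylF D m φ : characterSpace ℂ D) : WeakDual ℂ ↥D) = weylCharW m hm φ := by
  obtain ⟨ψ, hcoe, hprop⟩ := weylF_exists habel hm hmmD hmm'D hφ
  have := weylF_uniq habel hm hmmD hmm'D hφ hprop
  rw [← this, hcoe]

end WkAux
namespace WkAux

variable {A : Type} [NonUnitalNormedRing A] [StarRing A] [CStarRing A]
  [NormedSpace ℂ A] [IsScalarTower ℂ A A] [SMulCommClass ℂ A A] [CompleteSpace A] [StarModule ℂ A]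
variable {D : NonUnitalStarSubalgebra ℂ A}

lemma weylF_continuousOn (habel : ∀ x ∈ D, ∀ y ∈ D, x * y = y * x)
    {m : A} (hm : IsNormalizer D m) (hmmD : star m * m ∈ D) (hmm'D : m * star m ∈ D) :
    ContinuousOn (weylF D m) (suppo D (star m * m)) := by
  rw [continuousOn_iff_continuous_restrict]
  set S := suppo D (star m * m) with hS
  have hrepr : ∀ φ : ↥S, ((weylF D m ↑φ : characterSpace ℂ D) : WeakDual ℂ ↥D)
      = weylCharW m hm ↑φ := fun φ => weylF_coe habel hm hmmD hmm'D φ.2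
  apply continuous_induced_rng.mpr
  have heq : (Subtype.val ∘ fun φ : ↥S => (Set.restrict S (weylF D m)) φ)
      = fun φ : ↥S => weylCharW m hm ↑φ := funext fun φ => hrepr φ
  show Continuous (Subtype.val ∘ fun φ : ↥S => (Set.restrict S (weylF D m)) φ)
  rw [heq]
  apply WeakDual.continuous_of_continuous_eval
  intro y
  have happ : ∀ φ : ↥S, weylCharW m hm ↑φ y
      = (evalD D ↑φ (star m * m))⁻¹ * (↑φ : characterSpace ℂ D) (conjCLM m hm y) :=
    fun φ => rfl
  simp only [happ]
  have hc1 : Continuous fun φ : ↥S => evalD D (↑φ) (star m * m) := by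
    have h1 : (fun φ : ↥S => evalD D ↑φ (star m * m))
        = fun φ : ↥S => ((↑↑φ : WeakDual ℂ ↥D) (⟨star m * m, hmmD⟩ : ↥D)) :=
      funext fun φ => evalD_apply _ hmmD
    rw [h1]
    exact (WeakDual.eval_continuous _).comp
      (continuous_subtype_val.comp continuous_subtype_val)
  have hc2 : Continuous fun φ : ↥S => ((↑↑φ : WeakDual ℂ ↥D) (conjCLM m hm y)) :=
    (WeakDual.eval_continuous _).comp (continuous_subtype_val.comp continuous_subtype_val)
  exact (hc1.inv₀ fun φ => φ.2).mul hc2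

/-- The Weyl partial homeomorphism attached to a normalizer. -/
noncomputable def weylHomeo (habel : ∀ x ∈ D, ∀ y ∈ D, x * y = y * x)
    {n : A} (hn : IsNormalizer D n) (hnnD : star n * n ∈ D) (hnn'D : n * star n ∈ D) :
    PartialHomeomorph (characterSpace ℂ D) (characterSpace ℂ D) where
  toFun := weylF D n
  invFun := weylF D (star n)
  source := suppo D (star n * n)
  target := suppo D (n * star n)
  map_source' φ hφ := by
    show evalD D (weylF D n φ) (n * star n) ≠ 0
    rw [weylF_target habel hn hnnD hnn'D hφ]; exact hφ
  map_target' ψ hψ := by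
    show evalD D (weylF D (star n) ψ) (star n * n) ≠ 0
    have h0 : evalD D ψ (star (star n) * star n) ≠ 0 := by rw [star_star]; exact hψ
    have h1 := weylF_target habel (isNormalizer_star hn)
      (by rw [star_star]; exact hnn'D) (by rw [star_star]; exact hnnD) h0
    rw [star_star] at h1
    rw [h1]
    rw [star_star] at h0
    exact h0
  left_inv' φ hφ := weylF_left_inv habel hn hnnD hnn'D hφ
  right_inv' ψ hψ := by
    have h0 : evalD D ψ (star (star n) * star n) ≠ 0 := by rw [star_star]; exact hψ
    have h1 := weylF_left_inv habel (isNormalizer_star hn)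
      (by rw [star_star]; exact hnn'D) (by rw [star_star]; exact hnnD) h0
    rw [star_star] at h1
    exact h1
  continuousOn_toFun := weylF_continuousOn habel hn hnnD hnn'D
  continuousOn_invFun := by
    have h := weylF_continuousOn habel (isNormalizer_star hn)
      (by rw [star_star]; exact hnn'D) (by rw [star_star]; exact hnnD)
    rw [show star (star n) * star n = n * star n by rw [star_star]] at h
    exact h

lemma isWeylHomeo_weylHomeo (habel : ∀ x ∈ D, ∀ y ∈ D, x * y = y * x)
    {n : A} (hn : IsNormalizer D n) (hnnD : star n * n ∈ D) (hnn'D : n * star n ∈ D) :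
    IsWeylHomeo D n (weylHomeo habel hn hnnD hnn'D) := by
  refine ⟨rfl, rfl, ?_⟩
  intro φ hφ x hx
  exact weylF_prop habel hn hnnD hnn'D hφ x hx

/-- Pointwise uniqueness of Weyl homeomorphisms. -/
lemma isWeylHomeo_apply_eq {m : A}
    {α β : PartialHomeomorph (characterSpace ℂ D) (characterSpace ℂ D)}
    (hα : IsWeylHomeo D m α) (hβ : IsWeylHomeo D m β)
    {ψ : characterSpace ℂ D} (hψ : ψ ∈ suppo D (star m * m)) : α ψ = β ψ := by
  apply char_eq_of_forall_evalD
  intro x hx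
  have h1 := hα.2.2 ψ (by rw [hα.1]; exact hψ) x hx
  have h2 := hβ.2.2 ψ (by rw [hβ.1]; exact hψ) x hx
  exact mul_left_cancel₀ hψ (h1.trans h2.symm)

end WkAux
namespace WkAux

variable {A : Type} [NonUnitalNormedRing A] [StarRing A] [CStarRing A]
  [NormedSpace ℂ A] [IsScalarTower ℂ A A] [SMulCommClass ℂ A A] [CompleteSpace A] [StarModule ℂ A]
variable {D : NonUnitalStarSubalgebra ℂ A}

lemma mem_commutantAlg {a : A} (h : a ∈ commutantSet D) : a ∈ commutantAlg D := h

lemma mem_Jset_of {φ : characterSpace ℂ D} {z a : A} (hz : z ∈ D)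
    (hz0 : evalD D φ z = 0) (ha : a ∈ commutantSet D) : z * a ∈ Jset D φ :=
  subset_closure (Submodule.subset_span ⟨z, hz, a, ha, hz0, rfl⟩)

section Pi

variable {Q : Type} [NormedRing Q] [StarRing Q] [CStarRing Q] [NormedAlgebra ℂ Q]
  [CompleteSpace Q] [StarModule ℂ Q]

lemma pi_eq_of_sub_mem (π : commutantAlg D →⋆ₙₐ[ℂ] Q) {φ : characterSpace ℂ D}
    (hker : ∀ a : commutantAlg D, π a = 0 ↔ (a : A) ∈ Jset D φ)
    {w₁ w₂ : commutantAlg D} (h : (w₁ : A) - (w₂ : A) ∈ Jset D φ) : π w₁ = π w₂ := by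
  have h0 : π (w₁ - w₂) = 0 := (hker _).mpr h
  rw [map_sub] at h0
  exact sub_eq_zero.mp h0

/-- The master scalarization lemma: in the quotient `D'/J_φ`, elements of `D`
act as the scalars given by `φ`. -/
lemma pi_scalar (hWC : IsWeaklyCartan D)
    (π : commutantAlg D →⋆ₙₐ[ℂ] Q) {φ : characterSpace ℂ D}
    (hsurj : Function.Surjective ⇑π)
    (hker : ∀ a : commutantAlg D, π a = 0 ↔ (a : A) ∈ Jset D φ)
    {d : A} (hd : d ∈ D) (hd1 : evalD D φ d = 1) :
    (∀ (z : A) (hz : z ∈ D) (a : commutantAlg D),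
        π (⟨z, mem_commutantAlg (mem_commutantSet_of_mem hWC.2.1 hz)⟩ * a)
          = evalD D φ z • π a)
    ∧ (∀ (z : A) (hz : z ∈ D) (a : commutantAlg D),
        π (a * ⟨z, mem_commutantAlg (mem_commutantSet_of_mem hWC.2.1 hz)⟩)
          = evalD D φ z • π a)
    ∧ (∀ (z : A) (hz : z ∈ D),
        π ⟨z, mem_commutantAlg (mem_commutantSet_of_mem hWC.2.1 hz)⟩
          = evalD D φ z • 1) := by
  have habel := hWC.2.1
  obtain ⟨e0, he0D, U, hUo, hφU, hUunit⟩ := hWC.2.2.2.2 φ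
  have he : IsUnitModJ D φ e0 := hUunit φ hφU
  set el : ∀ (z : A), z ∈ D → commutantAlg D :=
    fun z hz => ⟨z, mem_commutantAlg (mem_commutantSet_of_mem habel hz)⟩ with hel
  -- A : right multiplication by e0 is the identity in the quotient
  have hA : ∀ a : commutantAlg D, π (a * el e0 he0D) = π a := by
    intro a
    exact pi_eq_of_sub_mem π hker (he.2 ↑a a.2).2
  have hA' : ∀ a : commutantAlg D, π (el e0 he0D * a) = π a := by
    intro a
    exact pi_eq_of_sub_mem π hker (he.2 ↑a a.2).1
  -- B : π e0 = 1
  have hB : π (el e0 he0D) = 1 := by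
    obtain ⟨a1, ha1⟩ := hsurj 1
    have := hA' a1
    rw [map_mul, ha1, mul_one] at this
    exact this
  -- C : scalarization against d
  have hC : ∀ (z : A) (hz : z ∈ D) (a : commutantAlg D),
      π (el z hz * a) = evalD D φ z • π (el d hd * a) := by
    intro z hz a
    have hsub : ((el z hz * a : commutantAlg D) : A)
        - ((evalD D φ z • (el d hd * a) : commutantAlg D) : A) ∈ Jset D φ := by
      have hval : ((el z hz * a : commutantAlg D) : A)
          - ((evalD D φ z • (el d hd * a) : commutantAlg D) : A)
          = (z - evalD D φ z • d) * (a : A) := by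
        show z * ↑a - evalD D φ z • (d * ↑a) = (z - evalD D φ z • d) * ↑a
        rw [sub_mul, smul_mul_assoc]
      rw [hval]
      refine mem_Jset_of (sub_mem hz (SMulMemClass.smul_mem _ hd)) ?_ a.2
      rw [evalD_sub φ hz (SMulMemClass.smul_mem _ hd), evalD_smul φ _ hd, hd1,
        mul_one, sub_self]
    have := pi_eq_of_sub_mem π hker hsub
    rw [map_smul] at this
    exact this
  -- (*) : π z = φ(z) • π d
  have hstar : ∀ (z : A) (hz : z ∈ D),
      π (el z hz) = evalD D φ z • π (el d hd) := by
    intro z hz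
    have h1 := hC z hz (el e0 he0D)
    rw [hA (el z hz), hA (el d hd)] at h1
    exact h1
  -- D : π d = 1
  have hD1 : π (el d hd) = 1 := by
    have h1 : (1 : Q) = evalD D φ e0 • π (el d hd) := by
      rw [← hstar e0 he0D, hB]
    have h2 : π (el d hd) * π (el d hd) = π (el d hd) := by
      have h3 := hstar (d * d) (mul_mem hd hd)
      rw [evalD_mul φ hd hd, hd1, one_mul, one_smul] at h3
      have h4 : el (d * d) (mul_mem hd hd) = el d hd * el d hd := Subtype.ext rfl
      rw [h4, map_mul] at h3
      exact h3
    calc π (el d hd) = π (el d hd) * 1 := (mul_one _).symm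
      _ = π (el d hd) * (evalD D φ e0 • π (el d hd)) := by rw [← h1]
      _ = evalD D φ e0 • (π (el d hd) * π (el d hd)) := (mul_smul_comm _ _ _)
      _ = evalD D φ e0 • π (el d hd) := by rw [h2]
      _ = 1 := h1.symm
  have hleft : ∀ (z : A) (hz : z ∈ D) (a : commutantAlg D),
      π (el z hz * a) = evalD D φ z • π a := by
    intro z hz a
    rw [hC z hz a, map_mul, hD1, one_mul]
  refine ⟨hleft, ?_, ?_⟩
  · intro z hz a
    have hcomm : el z hz * a = a * el z hz := by
      refine Subtype.ext ?_
      show z * ↑a = ↑a * z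
      exact (a.2 z hz).symm
    rw [← hcomm]
    exact hleft z hz a
  · intro z hz
    have := hstar z hz
    rw [hD1] at this
    exact this

/-- `π` of a scalar multiple of an element of `D`. -/
lemma pi_smulD (hWC : IsWeaklyCartan D)
    (π : commutantAlg D →⋆ₙₐ[ℂ] Q) {φ : characterSpace ℂ D}
    (hsurj : Function.Surjective ⇑π)
    (hker : ∀ a : commutantAlg D, π a = 0 ↔ (a : A) ∈ Jset D φ)
    {d : A} (hd : d ∈ D) (hd1 : evalD D φ d = 1)
    {z : A} (hzD : z ∈ D) (c : ℂ) (hmem : c • z ∈ commutantAlg D) :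
    π ⟨c • z, hmem⟩ = (c * evalD D φ z) • 1 := by
  have hzmem : z ∈ commutantAlg D := mem_commutantAlg (mem_commutantSet_of_mem hWC.2.1 hzD)
  have he : (⟨c • z, hmem⟩ : commutantAlg D) = c • (⟨z, hzmem⟩ : commutantAlg D) :=
    Subtype.ext rfl
  rw [he, map_smul, (pi_scalar hWC π hsurj hker hd hd1).2.2 z hzD, smul_smul]

end Pi

end WkAux
namespace WkAux

variable {A : Type} [NonUnitalNormedRing A] [StarRing A] [CStarRing A]
  [NormedSpace ℂ A] [IsScalarTower ℂ A A] [SMulCommClass ℂ A A] [CompleteSpace A] [StarModule ℂ A]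
variable {D : NonUnitalStarSubalgebra ℂ A}

lemma cpow_half_sq {z : ℂ} (hz : z ≠ 0) :
    z ^ (-(1/2) : ℂ) * z ^ (-(1/2) : ℂ) * z = 1 := by
  rw [← Complex.cpow_add _ _ hz]
  norm_num
  rw [Complex.cpow_neg_one]
  exact inv_mul_cancel₀ hz

/-- Value of the Weyl character at a conjugated element. -/
lemma alpha_apply_conj {n : A} {α : PartialHomeomorph (characterSpace ℂ D) (characterSpace ℂ D)}
    (hα : IsWeylHomeo D n α) (hn : IsNormalizer D n) (hnnD : star n * n ∈ D)
    {φ : characterSpace ℂ D} (hφ : evalD D φ (star n * n) ≠ 0)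
    {x : A} (hx : x ∈ D) :
    evalD D (α φ) (n * x * star n) = evalD D φ (star n * n) * evalD D φ x := by
  have hsource : φ ∈ α.source := by rw [hα.1]; exact hφ
  have h1 := hα.2.2 φ hsource (n * x * star n) (hn x hx).1
  have h2 : star n * (n * x * star n) * n = (star n * n) * x * (star n * n) := by
    simp [mul_assoc]
  rw [h2] at h1
  have h3 : evalD D φ (star n * n * x * (star n * n))
      = evalD D φ (star n * n) * evalD D φ x * evalD D φ (star n * n) := by
    rw [evalD_mul φ (mul_mem hnnD hx) hnnD, evalD_mul φ hnnD hx]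
  rw [h3] at h1
  apply mul_left_cancel₀ hφ
  rw [h1]; ring

section Unitary

variable {Q : Type} [NormedRing Q] [StarRing Q] [CStarRing Q] [NormedAlgebra ℂ Q]
  [CompleteSpace Q] [StarModule ℂ Q]

lemma star_mem_connectedComponent_one {u : Q} (hu : u ∈ unitary Q)
    (hc : (⟨u, hu⟩ : unitary Q) ∈ connectedComponent (1 : unitary Q))
    (hu' : star u ∈ unitary Q) :
    (⟨star u, hu'⟩ : unitary Q) ∈ connectedComponent (1 : unitary Q) := by
  set f : unitary Q → unitary Q := fun v => ⟨star ↑v, Unitary.star_mem v.2⟩ with hf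
  have hcont : Continuous f :=
    Continuous.subtype_mk (continuous_star.comp continuous_subtype_val) _
  have h1 : f 1 = 1 := Subtype.ext (by show star ((1 : unitary Q) : Q) = ((1 : unitary Q) : Q); simp)
  have himg := hcont.image_connectedComponent_subset (1 : unitary Q)
  rw [h1] at himg
  have : (⟨star u, hu'⟩ : unitary Q) = f ⟨u, hu⟩ := Subtype.ext rfl
  rw [this]
  exact himg ⟨⟨u, hu⟩, hc, rfl⟩

lemma mul_mem_connectedComponent_one {u v : Q} (hu : u ∈ unitary Q) (hv : v ∈ unitary Q)
    (hcu : (⟨u, hu⟩ : unitary Q) ∈ connectedComponent (1 : unitary Q))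
    (hcv : (⟨v, hv⟩ : unitary Q) ∈ connectedComponent (1 : unitary Q))
    (huv : u * v ∈ unitary Q) :
    (⟨u * v, huv⟩ : unitary Q) ∈ connectedComponent (1 : unitary Q) := by
  set f : unitary Q → unitary Q := fun w => (⟨u, hu⟩ : unitary Q) * w with hf
  have hcont : Continuous f := continuous_mul_left _
  have himg := hcont.image_connectedComponent_subset (1 : unitary Q)
  have h1 : f 1 = ⟨u, hu⟩ := mul_one _
  have hmem : f ⟨v, hv⟩ ∈ connectedComponent (f 1) := himg ⟨⟨v, hv⟩, hcv, rfl⟩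
  rw [h1, ← connectedComponent_eq hcu] at hmem
  have h2 : (⟨u * v, huv⟩ : unitary Q) = f ⟨v, hv⟩ := Subtype.ext rfl
  rw [h2]
  exact hmem

end Unitary

end WkAux
theorem statement_8 [TopologicalSpace.SeparableSpace A]
    (D : NonUnitalStarSubalgebra ℂ A) (hD : IsWeaklyCartan D) :
    Equivalence (fun p q : WeylPair D => WeylSimRaw D p.1.1 p.1.2 q.1.1 q.1.2) := by
  have habel := hD.2.1
  have hcl := hD.1
  have hau := hD.2.2.1
  constructor
  · -- reflexivity
    rintro ⟨⟨n, φ⟩, hn, hφ⟩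
    show WeylSimRaw D n φ n φ
    have hφ' : evalD D φ (star n * n) ≠ 0 := hφ
    have hnnD : star n * n ∈ D := WkAux.mem_of_evalD_ne_zero hφ'
    have hnn'D : n * star n ∈ D := WkAux.mul_self_star_mem hcl hau hn
    set α := WkAux.weylHomeo habel hn hnnD hnn'D with hα
    have hαW : IsWeylHomeo D n α := WkAux.isWeylHomeo_weylHomeo habel hn hnnD hnn'D
    set c0 := evalD D φ (star n * n) with hc0
    set d : A := c0⁻¹ • (star n * n) with hdd
    have hdD : d ∈ D := SMulMemClass.smul_mem _ hnnD
    have hd1 : evalD D φ d = 1 := by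
      rw [hdd, WkAux.evalD_smul φ _ hnnD]; exact inv_mul_cancel₀ hφ'
    have hsupp : suppo D d ⊆ suppo D (star n * n) := by
      intro ψ hψ
      simp only [suppo, Set.mem_setOf_eq] at hψ ⊢
      rw [hdd, WkAux.evalD_smul ψ _ hnnD] at hψ
      intro h0
      rw [h0, mul_zero] at hψ
      exact hψ rfl
    refine ⟨rfl, ⟨suppo D (star n * n), WkAux.suppo_isOpen _, hφ',
      Set.subset_inter Set.Subset.rfl Set.Subset.rfl, α, α, hαW, hαW, Set.eqOn_refl _ _⟩, ?_⟩
    intro Q _ _ _ _ _ _ π hsurj hker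
    set z : A := d * (star n * n) * d with hz
    have hzD : z ∈ D := mul_mem (mul_mem hdD hnnD) hdD
    set cc : ℂ := evalD D φ (star n * n) ^ (-(1/2) : ℂ)
      * evalD D φ (star n * n) ^ (-(1/2) : ℂ) with hcc
    have hzmem : z ∈ commutantAlg D :=
      WkAux.mem_commutantAlg (WkAux.mem_commutantSet_of_mem habel hzD)
    have hwmem : cc • z ∈ commutantAlg D := SMulMemClass.smul_mem _ hzmem
    have hsc := WkAux.pi_scalar hD π hsurj hker hdD hd1
    have h1 : π ⟨cc • z, hwmem⟩ = cc • π ⟨z, hzmem⟩ := by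
      have he : (⟨cc • z, hwmem⟩ : commutantAlg D) = cc • (⟨z, hzmem⟩ : commutantAlg D) :=
        Subtype.ext rfl
      rw [he, map_smul]
    have h2 : π (⟨z, hzmem⟩ : commutantAlg D) = evalD D φ z • 1 := hsc.2.2 z hzD
    have h3 : evalD D φ z = c0 := by
      rw [hz, WkAux.evalD_mul φ (mul_mem hdD hnnD) hdD, WkAux.evalD_mul φ hdD hnnD, hd1,
        one_mul, mul_one]
    have hπ1 : π ⟨cc • z, hwmem⟩ = 1 := by
      rw [h1, h2, h3, smul_smul, hcc]
      rw [show evalD D φ (star n * n) ^ (-(1/2) : ℂ)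
          * evalD D φ (star n * n) ^ (-(1/2) : ℂ) * c0 = 1 from WkAux.cpow_half_sq hφ']
      exact one_smul _ _
    refine ⟨⟨cc • z, hwmem⟩,
      ⟨suppo D (star n * n), WkAux.suppo_isOpen _, hφ',
        Set.subset_inter Set.Subset.rfl Set.Subset.rfl,
        ⟨α, α, hαW, hαW, Set.eqOn_refl _ _⟩, d, hdD, hsupp, hd1, rfl⟩, ?_⟩
    have hu : π ⟨cc • z, hwmem⟩ ∈ unitary Q := by
      rw [hπ1]; exact one_mem _
    refine ⟨hu, ?_⟩
    have heq1 : (⟨π ⟨cc • z, hwmem⟩, hu⟩ : unitary Q) = 1 := Subtype.ext hπ1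
    rw [heq1]
    exact mem_connectedComponent
  · -- symmetry
    rintro ⟨⟨n, φ⟩, hn, hφn⟩ ⟨⟨m, ψ⟩, hm, hψm⟩ h
    obtain ⟨hfeq, hdata, hU0⟩ := h
    show WeylSimRaw D m ψ n φ
    have hfeq' : φ = ψ := hfeq
    subst hfeq'
    obtain ⟨U, hUo, hφU, hUsub, αn, αm, hαn, hαm, heqU⟩ := hdata
    refine ⟨rfl, ⟨U, hUo, hφU, fun x hx => ⟨(hUsub hx).2, (hUsub hx).1⟩,
      αm, αn, hαm, hαn, heqU.symm⟩, ?_⟩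
    intro Q _ _ _ _ _ _ π hsurj hker
    obtain ⟨w, hwrep, hu, hcomp⟩ := hU0 Q π hsurj hker
    obtain ⟨U', hU'o, hφU', hU'sub, ⟨αn', αm', hαn', hαm', heq'⟩,
      d, hdD, hdsupp, hd1, hwval⟩ := hwrep
    have hφn' : evalD D φ (star n * n) ≠ 0 := (hU'sub hφU').1
    have hφm' : evalD D φ (star m * m) ≠ 0 := (hU'sub hφU').2
    have hnnD : star n * n ∈ D := WkAux.mem_of_evalD_ne_zero hφn'
    have hmmD : star m * m ∈ D := WkAux.mem_of_evalD_ne_zero hφm'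
    set x : A := d * (star n * m) * d with hx
    set x' : A := d * (star m * n) * d with hx'
    set cm := evalD D φ (star m * m) ^ (-(1/2) : ℂ) with hcm
    set cn := evalD D φ (star n * n) ^ (-(1/2) : ℂ) with hcn
    have hx'mem : x' ∈ commutantAlg D := by
      apply WkAux.mem_commutantAlg
      rw [hx']
      apply WkAux.commutant_core hcl habel hm hn hdD
      intro χ hχ
      have hχU : χ ∈ U' := hdsupp hχ
      refine ⟨(hU'sub hχU).2, ?_⟩
      intro g hg
      have h1 := hαn'.2.2 χ (by rw [hαn'.1]; exact (hU'sub hχU).1) g hg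
      have h2 := hαm'.2.2 χ (by rw [hαm'.1]; exact (hU'sub hχU).2) g hg
      have h3 : αn' χ = αm' χ := heq' hχU
      rw [h3] at h1
      calc evalD D χ (star n * n) * evalD D χ (star m * g * m)
          = evalD D χ (star n * n) * (evalD D χ (star m * m) * evalD D (αm' χ) g) := by
            rw [h2]
        _ = evalD D χ (star m * m) * (evalD D χ (star n * n) * evalD D (αm' χ) g) := by
            ring
        _ = evalD D χ (star m * m) * evalD D χ (star n * g * n) := by rw [h1]
    set w' : commutantAlg D := ⟨(cn * cm) • x', SMulMemClass.smul_mem _ hx'mem⟩ with hw'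
    have hrep' : WeylRep D m n φ (w' : A) := by
      exact ⟨U', hU'o, hφU', fun y hy => ⟨(hU'sub hy).2, (hU'sub hy).1⟩,
        ⟨αm', αn', hαm', hαn', heq'.symm⟩, d, hdD, hdsupp, hd1, rfl⟩
    -- products
    have hzz : x' * x = d * (star m * (n * (d * d) * star n) * m) * d := by
      rw [hx, hx']; simp [mul_assoc]
    have hzz' : x * x' = d * (star n * (m * (d * d) * star m) * n) * d := by
      rw [hx, hx']; simp [mul_assoc]
    have hgD : n * (d * d) * star n ∈ D := (hn _ (mul_mem hdD hdD)).1
    have hg'D : m * (d * d) * star m ∈ D := (hm _ (mul_mem hdD hdD)).1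
    have hzzD : x' * x ∈ D := by
      rw [hzz]; exact mul_mem (mul_mem hdD ((hm _ hgD).2)) hdD
    have hzz'D : x * x' ∈ D := by
      rw [hzz']; exact mul_mem (mul_mem hdD ((hn _ hg'D).2)) hdD
    have hdd1 : evalD D φ (d * d) = 1 := by
      rw [WkAux.evalD_mul φ hdD hdD, hd1, mul_one]
    have hval1 : evalD D φ (x' * x)
        = evalD D φ (star m * m) * evalD D φ (star n * n) := by
      rw [hzz, WkAux.evalD_mul φ (mul_mem hdD ((hm _ hgD).2)) hdD,
        WkAux.evalD_mul φ hdD ((hm _ hgD).2), hd1, one_mul, mul_one]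
      have h2 := hαm'.2.2 φ (by rw [hαm'.1]; exact hφm') _ hgD
      rw [← h2]
      congr 1
      have h3 : αm' φ = αn' φ := (heq' hφU').symm
      rw [h3]
      have h4 := WkAux.alpha_apply_conj hαn' hn hnnD hφn' (mul_mem hdD hdD)
      rw [h4, hdd1, mul_one]
    have hval2 : evalD D φ (x * x')
        = evalD D φ (star n * n) * evalD D φ (star m * m) := by
      rw [hzz', WkAux.evalD_mul φ (mul_mem hdD ((hn _ hg'D).2)) hdD,
        WkAux.evalD_mul φ hdD ((hn _ hg'D).2), hd1, one_mul, mul_one]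
      have h2 := hαn'.2.2 φ (by rw [hαn'.1]; exact hφn') _ hg'D
      rw [← h2]
      congr 1
      have h3 : αn' φ = αm' φ := heq' hφU'
      rw [h3]
      have h4 := WkAux.alpha_apply_conj hαm' hm hmmD hφm' (mul_mem hdD hdD)
      rw [h4, hdd1, mul_one]
    -- scalar identities
    have hSm : cm * cm * evalD D φ (star m * m) = 1 := WkAux.cpow_half_sq hφm'
    have hSn : cn * cn * evalD D φ (star n * n) = 1 := WkAux.cpow_half_sq hφn'
    -- π (w' * w) = 1
    have hcoe1 : ((w' * w : commutantAlg D) : A) = ((cn * cm) * (cm * cn)) • (x' * x) := by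
      show ((w' : A) * (w : A)) = _
      rw [hwval]
      show ((cn * cm) • x') * ((cm * cn) • x) = _
      rw [smul_mul_assoc, mul_smul_comm, smul_smul]
    have hπ1 : π (w' * w) = 1 := by
      have he : (w' * w : commutantAlg D)
          = ⟨((cn * cm) * (cm * cn)) • (x' * x), hcoe1 ▸ (w' * w).2⟩ := Subtype.ext hcoe1
      rw [he, WkAux.pi_smulD hD π hsurj hker hdD hd1 hzzD _ _, hval1]
      rw [show (cn * cm) * (cm * cn) * (evalD D φ (star m * m) * evalD D φ (star n * n))
          = 1 by linear_combination (cn * cn * evalD D φ (star n * n)) * hSm + hSn]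
      exact one_smul _ _
    have hcoe2 : ((w * w' : commutantAlg D) : A) = ((cm * cn) * (cn * cm)) • (x * x') := by
      show ((w : A) * (w' : A)) = _
      rw [hwval]
      show ((cm * cn) • x) * ((cn * cm) • x') = _
      rw [smul_mul_assoc, mul_smul_comm, smul_smul]
    have hπ2 : π (w * w') = 1 := by
      have he : (w * w' : commutantAlg D)
          = ⟨((cm * cn) * (cn * cm)) • (x * x'), hcoe2 ▸ (w * w').2⟩ := Subtype.ext hcoe2
      rw [he, WkAux.pi_smulD hD π hsurj hker hdD hd1 hzz'D _ _, hval2]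
      rw [show (cm * cn) * (cn * cm) * (evalD D φ (star n * n) * evalD D φ (star m * m))
          = 1 by linear_combination (cm * cm * evalD D φ (star m * m)) * hSn + hSm]
      exact one_smul _ _
    rw [map_mul] at hπ1 hπ2
    have hustar := Unitary.mem_iff.mp hu
    have hπw' : π w' = star (π w) := by
      calc π w' = π w' * 1 := (mul_one _).symm
        _ = π w' * (π w * star (π w)) := by rw [hustar.2]
        _ = (π w' * π w) * star (π w) := (mul_assoc _ _ _).symm
        _ = 1 * star (π w) := by rw [hπ1]
        _ = star (π w) := one_mul _
    have hu' : π w' ∈ unitary Q := by rw [hπw']; exact Unitary.star_mem hu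
    refine ⟨w', hrep', hu', ?_⟩
    have heq2 : (⟨π w', hu'⟩ : unitary Q)
        = ⟨star (π w), Unitary.star_mem hu⟩ := Subtype.ext hπw'
    rw [heq2]
    exact WkAux.star_mem_connectedComponent_one hu hcomp (Unitary.star_mem hu)
  · -- transitivity
    rintro ⟨⟨n, φ⟩, hn, hφn⟩ ⟨⟨m, ψ⟩, hm, hψm⟩ ⟨⟨k, ρ⟩, hk, hρk⟩ h12 h23
    obtain ⟨hfeq1, hdata1, hU01⟩ := h12
    obtain ⟨hfeq2, hdata2, hU02⟩ := h23
    show WeylSimRaw D n φ k ρ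
    have hfeq1' : φ = ψ := hfeq1
    subst hfeq1'
    have hfeq2' : φ = ρ := hfeq2
    subst hfeq2'
    obtain ⟨U1, hU1o, hφU1, hU1sub, αn1, αm1, hαn1, hαm1, heq1⟩ := hdata1
    obtain ⟨U2, hU2o, hφU2, hU2sub, αm2, αk2, hαm2, hαk2, heq2⟩ := hdata2
    refine ⟨rfl, ⟨U1 ∩ U2, hU1o.inter hU2o, ⟨hφU1, hφU2⟩,
      fun χ hχ => ⟨(hU1sub hχ.1).1, (hU2sub hχ.2).2⟩, αn1, αk2, hαn1, hαk2, ?_⟩, ?_⟩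
    · intro χ hχ
      have ha := heq1 hχ.1
      have hb := WkAux.isWeylHomeo_apply_eq hαm1 hαm2 ((hU2sub hχ.2).1)
      have hc := heq2 hχ.2
      rw [ha, hb, hc]
    intro Q _ _ _ _ _ _ π hsurj hker
    obtain ⟨w1, hw1rep, hu1, hcomp1⟩ := hU01 Q π hsurj hker
    obtain ⟨w2, hw2rep, hu2, hcomp2⟩ := hU02 Q π hsurj hker
    obtain ⟨V1, hV1o, hφV1, hV1sub, ⟨βn, βm, hβn, hβm, heqV1⟩,
      d1, hd1D, hd1supp, hd11, hw1val⟩ := hw1rep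
    obtain ⟨V2, hV2o, hφV2, hV2sub, ⟨γm, γk, hγm, hγk, heqV2⟩,
      d2, hd2D, hd2supp, hd21, hw2val⟩ := hw2rep
    have hφn' : evalD D φ (star n * n) ≠ 0 := (hV1sub hφV1).1
    have hφm' : evalD D φ (star m * m) ≠ 0 := (hV1sub hφV1).2
    have hφk' : evalD D φ (star k * k) ≠ 0 := (hV2sub hφV2).2
    have hnnD : star n * n ∈ D := WkAux.mem_of_evalD_ne_zero hφn'
    have hmmD : star m * m ∈ D := WkAux.mem_of_evalD_ne_zero hφm'
    have hkkD : star k * k ∈ D := WkAux.mem_of_evalD_ne_zero hφk'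
    set d3 : A := d1 * d2 with hd3
    have hd3D : d3 ∈ D := mul_mem hd1D hd2D
    have hd31 : evalD D φ d3 = 1 := by
      rw [hd3, WkAux.evalD_mul φ hd1D hd2D, hd11, hd21, mul_one]
    have hd3supp : ∀ χ : characterSpace ℂ D, evalD D χ d3 ≠ 0 →
        evalD D χ d1 ≠ 0 ∧ evalD D χ d2 ≠ 0 := by
      intro χ h
      rw [hd3, WkAux.evalD_mul χ hd1D hd2D] at h
      exact ⟨left_ne_zero_of_mul h, right_ne_zero_of_mul h⟩
    have hchainpt : ∀ χ : characterSpace ℂ D, evalD D χ d3 ≠ 0 → βn χ = γk χ := by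
      intro χ hχ
      obtain ⟨h1, h2⟩ := hd3supp χ hχ
      have hχ1 : χ ∈ V1 := hd1supp h1
      have hχ2 : χ ∈ V2 := hd2supp h2
      rw [heqV1 hχ1, WkAux.isWeylHomeo_apply_eq hβm hγm ((hV1sub hχ1).2), heqV2 hχ2]
    set x3 : A := d3 * (star n * k) * d3 with hx3
    have hx3mem : x3 ∈ commutantAlg D := by
      apply WkAux.mem_commutantAlg
      rw [hx3]
      apply WkAux.commutant_core hcl habel hn hk hd3D
      intro χ hχ
      have hχ1 : χ ∈ V1 := hd1supp (hd3supp χ hχ).1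
      have hχ2 : χ ∈ V2 := hd2supp (hd3supp χ hχ).2
      refine ⟨(hV1sub hχ1).1, ?_⟩
      intro g hg
      have h1 := hβn.2.2 χ (by rw [hβn.1]; exact (hV1sub hχ1).1) g hg
      have h2 := hγk.2.2 χ (by rw [hγk.1]; exact (hV2sub hχ2).2) g hg
      rw [hchainpt χ hχ] at h1
      calc evalD D χ (star k * k) * evalD D χ (star n * g * n)
          = evalD D χ (star k * k) * (evalD D χ (star n * n) * evalD D (γk χ) g) := by
            rw [h1]
        _ = evalD D χ (star n * n) * (evalD D χ (star k * k) * evalD D (γk χ) g) := by ring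
        _ = evalD D χ (star n * n) * evalD D χ (star k * g * k) := by rw [h2]
    set h0 : A := m * d3 * star m with hh0
    have hmidD : h0 ∈ D := (hm d3 hd3D).1
    set y : A := d3 * (star n * (h0 * k)) * d3 with hy
    have hymem : y ∈ commutantAlg D := by
      apply WkAux.mem_commutantAlg
      rw [hy]
      apply WkAux.commutant_core hcl habel hn (WkAux.isNormalizer_mulD hmidD hk) hd3D
      intro χ hχ
      have hχ1 : χ ∈ V1 := hd1supp (hd3supp χ hχ).1
      have hχ2 : χ ∈ V2 := hd2supp (hd3supp χ hχ).2
      refine ⟨(hV1sub hχ1).1, ?_⟩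
      intro g hg
      have ha1 : star (h0 * k) * (h0 * k) = star k * (star h0 * h0) * k := by
        simp [star_mul, mul_assoc]
      have ha2 : star (h0 * k) * g * (h0 * k) = star k * (star h0 * (g * h0)) * k := by
        simp [star_mul, mul_assoc]
      have hk1 := hγk.2.2 χ (by rw [hγk.1]; exact (hV2sub hχ2).2) (star h0 * h0)
        (mul_mem (star_mem hmidD) hmidD)
      have hk2 := hγk.2.2 χ (by rw [hγk.1]; exact (hV2sub hχ2).2) (star h0 * (g * h0))
        (mul_mem (star_mem hmidD) (mul_mem hg hmidD))
      have hn1 := hβn.2.2 χ (by rw [hβn.1]; exact (hV1sub hχ1).1) g hg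
      rw [hchainpt χ hχ] at hn1
      rw [ha1, ha2, ← hk1, ← hk2, ← hn1,
        WkAux.evalD_mul (γk χ) (star_mem hmidD) hmidD,
        WkAux.evalD_mul (γk χ) (star_mem hmidD) (mul_mem hg hmidD),
        WkAux.evalD_mul (γk χ) hg hmidD]
      ring
    -- the key A-identity
    have hg3D : n * d3 * star n ∈ D := (hn d3 hd3D).1
    have hnn'D : n * star n ∈ D := WkAux.mul_self_star_mem hcl hau hn
    have hnh0nD : star n * h0 * n ∈ D := (hn h0 hmidD).2
    have hcomm0 : h0 * (n * d3 * star n) = (n * d3 * star n) * h0 :=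
      habel h0 hmidD _ hg3D
    have hiden : (star n * h0 * n) * x3 = (star n * n) * y := by
      rw [hx3, hy]
      calc (star n * h0 * n) * (d3 * (star n * k) * d3)
          = star n * ((h0 * (n * d3 * star n)) * (k * d3)) := by simp [mul_assoc]
        _ = star n * (((n * d3 * star n) * h0) * (k * d3)) := by rw [hcomm0]
        _ = (star n * n) * (d3 * (star n * (h0 * k)) * d3) := by simp [mul_assoc]
    -- scalarization
    have hsc := WkAux.pi_scalar hD π hsurj hker hd1D hd11
    set X3 : commutantAlg D := ⟨x3, hx3mem⟩ with hX3
    set Y : commutantAlg D := ⟨y, hymem⟩ with hY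
    have hπa : π (⟨star n * h0 * n,
        WkAux.mem_commutantAlg (WkAux.mem_commutantSet_of_mem habel hnh0nD)⟩ * X3)
        = evalD D φ (star n * h0 * n) • π X3 := hsc.1 _ hnh0nD X3
    have hπb : π (⟨star n * n,
        WkAux.mem_commutantAlg (WkAux.mem_commutantSet_of_mem habel hnnD)⟩ * Y)
        = evalD D φ (star n * n) • π Y := hsc.1 _ hnnD Y
    have hprod : (⟨star n * h0 * n,
        WkAux.mem_commutantAlg (WkAux.mem_commutantSet_of_mem habel hnh0nD)⟩
          : commutantAlg D) * X3
        = (⟨star n * n,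
        WkAux.mem_commutantAlg (WkAux.mem_commutantSet_of_mem habel hnnD)⟩
          : commutantAlg D) * Y := Subtype.ext hiden
    have hc1val : evalD D φ (star n * h0 * n)
        = evalD D φ (star n * n) * evalD D φ (star m * m) := by
      have h1 := hβn.2.2 φ (by rw [hβn.1]; exact hφn') h0 hmidD
      rw [← h1]
      congr 1
      rw [heqV1 hφV1]
      have h4 := WkAux.alpha_apply_conj hβm hm hmmD hφm' hd3D
      rw [hh0] at *
      rw [h4, hd31, mul_one]
    have h6 : (evalD D φ (star n * n) * evalD D φ (star m * m)) • π X3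
        = evalD D φ (star n * n) • π Y := by
      rw [← hc1val, ← hπa, hprod, hπb]
    have hYX : π Y = evalD D φ (star m * m) • π X3 := by
      calc π Y = ((evalD D φ (star n * n))⁻¹ * evalD D φ (star n * n)) • π Y := by
            rw [inv_mul_cancel₀ hφn', one_smul]
        _ = (evalD D φ (star n * n))⁻¹ • (evalD D φ (star n * n) • π Y) := by
            rw [smul_smul]
        _ = (evalD D φ (star n * n))⁻¹
            • ((evalD D φ (star n * n) * evalD D φ (star m * m)) • π X3) := by rw [← h6]
        _ = ((evalD D φ (star n * n))⁻¹
            * (evalD D φ (star n * n) * evalD D φ (star m * m))) • π X3 := by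
            rw [smul_smul]
        _ = evalD D φ (star m * m) • π X3 := by
            rw [← mul_assoc, inv_mul_cancel₀ hφn', one_mul]
    -- w1 * w2
    have hcmd : d2 * d1 = d1 * d2 := habel d2 hd2D d1 hd1D
    have haid2 : d2 * ((d1 * (star n * m) * d1) * (d2 * (star m * k) * d2)) * d1 = y := by
      calc d2 * ((d1 * (star n * m) * d1) * (d2 * (star m * k) * d2)) * d1
          = (d2 * d1) * (star n * (m * ((d1 * d2) * star m) * k)) * (d2 * d1) := by
            simp [mul_assoc]
        _ = (d1 * d2) * (star n * (m * ((d1 * d2) * star m) * k)) * (d1 * d2) := by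
            rw [hcmd]
        _ = y := by rw [hy, hh0, hd3]; simp [mul_assoc]
    have hd1mem : d1 ∈ commutantAlg D :=
      WkAux.mem_commutantAlg (WkAux.mem_commutantSet_of_mem habel hd1D)
    have hd2mem : d2 ∈ commutantAlg D :=
      WkAux.mem_commutantAlg (WkAux.mem_commutantSet_of_mem habel hd2D)
    set cf1 : ℂ := evalD D φ (star m * m) ^ (-(1/2) : ℂ)
      * evalD D φ (star n * n) ^ (-(1/2) : ℂ) with hcf1
    set cf2 : ℂ := evalD D φ (star k * k) ^ (-(1/2) : ℂ)
      * evalD D φ (star m * m) ^ (-(1/2) : ℂ) with hcf2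
    set cf3 : ℂ := evalD D φ (star k * k) ^ (-(1/2) : ℂ)
      * evalD D φ (star n * n) ^ (-(1/2) : ℂ) with hcf3
    have hbig : (⟨d2, hd2mem⟩ : commutantAlg D) * (w1 * w2) * ⟨d1, hd1mem⟩
        = (cf1 * cf2) • Y := by
      refine Subtype.ext ?_
      show d2 * ((w1 : A) * (w2 : A)) * d1 = (cf1 * cf2) • y
      rw [hw1val, hw2val]
      calc d2 * ((cf1 • (d1 * (star n * m) * d1)) * (cf2 • (d2 * (star m * k) * d2))) * d1
          = (cf1 * cf2) • (d2 * ((d1 * (star n * m) * d1) * (d2 * (star m * k) * d2)) * d1)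
            := by
            simp only [smul_mul_assoc, mul_smul_comm, smul_smul]
            rw [mul_comm cf2 cf1]
        _ = (cf1 * cf2) • y := by rw [haid2]
    have hπbig : π w1 * π w2 = (cf1 * cf2) • π Y := by
      have h7 := congrArg π hbig
      rw [map_smul] at h7
      rw [hsc.2.1 d1 hd1D (⟨d2, hd2mem⟩ * (w1 * w2)), hd11, one_smul,
        hsc.1 d2 hd2D (w1 * w2), hd21, one_smul, map_mul] at h7
      exact h7
    set w3 : commutantAlg D := ⟨cf3 • x3, SMulMemClass.smul_mem _ hx3mem⟩ with hw3
    have hπw3 : π w3 = cf3 • π X3 := by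
      have he : w3 = cf3 • X3 := Subtype.ext rfl
      rw [he, map_smul]
    have hscal : cf1 * cf2 * evalD D φ (star m * m) = cf3 := by
      have hSm : evalD D φ (star m * m) ^ (-(1/2) : ℂ)
          * evalD D φ (star m * m) ^ (-(1/2) : ℂ) * evalD D φ (star m * m) = 1 :=
        WkAux.cpow_half_sq hφm'
      rw [hcf1, hcf2, hcf3]
      linear_combination (evalD D φ (star k * k) ^ (-(1/2) : ℂ)
        * evalD D φ (star n * n) ^ (-(1/2) : ℂ)) * hSm
    have hfinal : π w3 = π w1 * π w2 := by
      rw [hπw3, hπbig, hYX, smul_smul, hscal]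
    have hu3 : π w3 ∈ unitary Q := by
      rw [hfinal]; exact mul_mem hu1 hu2
    refine ⟨w3, ?_, hu3, ?_⟩
    · refine ⟨V1 ∩ V2, hV1o.inter hV2o, ⟨hφV1, hφV2⟩,
        fun χ hχ => ⟨(hV1sub hχ.1).1, (hV2sub hχ.2).2⟩, ⟨βn, γk, hβn, hγk, ?_⟩,
        d3, hd3D, ?_, hd31, rfl⟩
      · intro χ hχ
        rw [heqV1 hχ.1, WkAux.isWeylHomeo_apply_eq hβm hγm ((hV1sub hχ.1).2), heqV2 hχ.2]
      · intro χ hχ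
        exact ⟨hd1supp (hd3supp χ hχ).1, hd2supp (hd3supp χ hχ).2⟩
    · have heq3 : (⟨π w3, hu3⟩ : unitary Q) = ⟨π w1 * π w2, by rw [← hfinal]; exact hu3⟩ :=
        Subtype.ext hfinal
      rw [heq3]
      exact WkAux.mul_mem_connectedComponent_one hu1 hu2 hcomp1 hcomp2 _
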